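/- Let G be a topological group and A ⊆ G. Suppose A satisfies Rosendal's criterion: for every identity neighborhood U ⊆ G there exist a finite subset F ⊆ G and k ∈ ℕ such that every a ∈ A can be written as a product a = f₁u₁⋯f_ℓu_ℓ with ℓ ≤ k, f_i ∈ F and u_i ∈ U. Then A is coarsely bounded in G. -/

import Mathlib

open Pointwise

/-- A continuous, left-invariant pseudometric on a topological group `G`. -/
structure IsContLeftInvPseudometric (G : Type*) [Group G] [TopologicalSpace G]
    (d : G → G → ℝ) : Prop where
  continuous : Continuous fun p : G × G => d p.1 p.2
  self : ∀ x : G, d x x = 0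
  symm : ∀ x y : G, d x y = d y x
  nonneg : ∀ x y : G, 0 ≤ d x y
  triangle : ∀ x y z : G, d x z ≤ d x y + d y z
  left_inv : ∀ g x y : G, d (g * x) (g * y) = d x y

/-- A subset `A` of a topological group `G` is coarsely bounded in `G` if it has
finite diameter with respect to every continuous left-invariant pseudometric on `G`. -/
def IsCoarselyBounded (G : Type*) [Group G] [TopologicalSpace G] (A : Set G) : Prop :=
  ∀ d : G → G → ℝ, IsContLeftInvPseudometric G d →
    ∃ M : ℝ, ∀ a ∈ A, ∀ b ∈ A, d a b ≤ M

/-- The word length of `g` with respect to a generating set `S`: the least `n` such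
that `g` is a product of `n` elements of `S`. -/
noncomputable def wordLength {G : Type*} [Group G] (S : Set G) (g : G) : ℕ :=
  sInf {n : ℕ | ∃ l : List G, l.length = n ∧ (∀ s ∈ l, s ∈ S) ∧ l.prod = g}

/-- `G` admits a geometry if there is a continuous left-invariant pseudometric on `G`
which dominates, in the coarse Lipschitz sense, every continuous left-invariant
pseudometric on `G`. -/
def AdmitsAGeometry (G : Type*) [Group G] [TopologicalSpace G] : Prop :=
  ∃ d : G → G → ℝ, IsContLeftInvPseudometric G d ∧
    ∀ d' : G → G → ℝ, IsContLeftInvPseudometric G d' →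
      ∃ L K : ℝ, 0 < L ∧ 0 ≤ K ∧ ∀ g h : G, d' g h ≤ L * d g h + K

/-- Rosendal's criterion implies coarse boundedness: if for every identity
neighborhood `U` there are a finite set `F` and `k` such that every element of `A`
is a product of at most `k` factors of the form `f * u` with `f ∈ F`, `u ∈ U`,
then `A` is coarsely bounded in `G`. -/
theorem isCoarselyBounded_of_rosendal_criterion {G : Type*} [Group G] [TopologicalSpace G]
    [IsTopologicalGroup G] (A : Set G)
    (hA : ∀ U ∈ nhds (1 : G), ∃ (F : Finset G) (k : ℕ),
      ∀ a ∈ A, ∃ ℓ : ℕ, ℓ ≤ k ∧ ∃ f u : Fin ℓ → G,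
        (∀ i, f i ∈ F) ∧ (∀ i, u i ∈ U) ∧
        a = (List.ofFn fun i => f i * u i).prod) :
    IsCoarselyBounded G A := by
  intro d hd
  have hcont : Continuous fun u : G => d 1 u :=
    hd.continuous.comp (continuous_const.prodMk continuous_id)
  have hU : (fun u : G => d 1 u) ⁻¹' Set.Iio 1 ∈ nhds (1 : G) := by
    apply hcont.continuousAt.preimage_mem_nhds
    rw [hd.self]
    exact Iio_mem_nhds one_pos
  obtain ⟨F, k, hF⟩ := hA _ hU
  set C : ℝ := ∑ f ∈ F, d 1 f with hC
  have hCf : ∀ f ∈ F, d 1 f ≤ C := fun f hf =>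
    Finset.single_le_sum (fun g _ => hd.nonneg 1 g) hf
  have hC0 : 0 ≤ C := Finset.sum_nonneg fun g _ => hd.nonneg 1 g
  have tri : ∀ x y : G, d 1 (x * y) ≤ d 1 x + d 1 y := by
    intro x y
    have h := hd.triangle 1 x (x * y)
    rwa [show d x (x * y) = d 1 y by simpa using hd.left_inv x 1 y] at h
  have key : ∀ l : List G, (∀ x ∈ l, d 1 x ≤ C + 1) →
      d 1 l.prod ≤ l.length * (C + 1) := by
    intro l
    induction l with
    | nil => intro _; simp [hd.self]
    | cons x t ih =>
      intro h
      calc d 1 (x :: t).prod = d 1 (x * t.prod) := by simp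
        _ ≤ d 1 x + d 1 t.prod := tri x t.prod
        _ ≤ (C + 1) + t.length * (C + 1) :=
            add_le_add (h x (by simp)) (ih fun y hy => h y (by simp [hy]))
        _ = (x :: t).length * (C + 1) := by
            push_cast [List.length_cons]; ring
  have hbound : ∀ a ∈ A, d 1 a ≤ k * (C + 1) := by
    intro a ha
    obtain ⟨ℓ, hℓ, f, u, hf, hu, hprod⟩ := hF a ha
    have h1 : d 1 a ≤ (List.ofFn fun i => f i * u i).length * (C + 1) := by
      rw [hprod]
      apply key
      intro x hx
      rw [List.mem_ofFn] at hx
      obtain ⟨i, rfl⟩ := hx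
      have h2 := hCf _ (hf i)
      have h3 : d 1 (u i) < 1 := hu i
      have := tri (f i) (u i)
      linarith
    rw [List.length_ofFn] at h1
    calc d 1 a ≤ ℓ * (C + 1) := h1
      _ ≤ k * (C + 1) := by
          apply mul_le_mul_of_nonneg_right _ (by linarith)
          exact_mod_cast hℓ
  refine ⟨2 * (k * (C + 1)), fun a ha b hb => ?_⟩
  have ha1 := hbound a ha
  have hb1 := hbound b hb
  have htr := hd.triangle a 1 b
  have hsymm : d a 1 = d 1 a := hd.symm a 1
  linarith
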